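/- For n ≥ 1 and 1 ≤ i ≤ n−1, the product h_i · s_{(m+1,1^{n-i})} (with m ≥ 1) equals \sum_{x=0}^{min(m,i-1)} s_{(m+i-x, x+1, 1^{n-i})} + \sum_{x=0}^{min(m,i)} s_{(m+1+i-x, x+1, 1^{n-i-1})}. -/

import Mathlib

open MvPolynomial Finset

noncomputable section

/-- The ring of symmetric functions, as the free polynomial ring generated by the
complete homogeneous symmetric functions `h₁, h₂, …` (variable `n` is `h_{n+1}`). -/
abbrev SymF := MvPolynomial ℕ ℤ

/-- The complete homogeneous symmetric function `h_n`, with `h_n = 0` for `n < 0`. -/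
def hh : ℤ → SymF
  | Int.ofNat 0 => 1
  | Int.ofNat (n+1) => X n
  | Int.negSucc _ => 0

/-- The Schur function `s_λ` for `λ = (lam 0, lam 1, …, lam (l-1))`, defined by the
Jacobi–Trudi determinant `det (h_{λ_i - i + j})₁≤i,j≤l`. -/
def schur (l : ℕ) (lam : Fin l → ℕ) : SymF :=
  Matrix.det (Matrix.of fun i j : Fin l => hh ((lam i : ℤ) + (j : ℤ) - (i : ℤ)))

/-- The elementary symmetric function `e_n = s_{(1^n)}`. -/
def ee (n : ℕ) : SymF := schur n (fun _ => 1)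

/-- The skew Schur function `s_{λ/μ}`, via the Jacobi–Trudi determinant
`det (h_{λ_i - μ_j - i + j})`. -/
def skewSchur (l : ℕ) (lam mu : Fin l → ℕ) : SymF :=
  Matrix.det (Matrix.of fun i j : Fin l =>
    hh ((lam i : ℤ) - (mu j : ℤ) + (j : ℤ) - (i : ℤ)))

lemma hh_zero : hh 0 = 1 := rfl
lemma hh_neg {a : ℤ} (h : a < 0) : hh a = 0 := by
  match a, h with
  | Int.negSucc n, _ => rfl
lemma hh_congr {a b : ℤ} (h : a = b) : hh a = hh b := by rw [h]

def DM (l : ℕ) (ρ : ℕ → ℤ) (t : ℕ) : SymF :=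
  Matrix.det (Matrix.of fun p q : Fin l =>
    hh (ρ p + (q : ℤ) + if (q : ℕ) = l - 1 then (t : ℤ) else 0))

lemma DM_two (ρ : ℕ → ℤ) (t : ℕ) :
    DM 2 ρ t = hh (ρ 0) * hh (ρ 1 + 1 + t) - hh (ρ 0 + 1 + t) * hh (ρ 1) := by
  rw [DM, Matrix.det_fin_two]
  simp [Matrix.of_apply]

lemma DM_succ (n : ℕ) (hn : 1 ≤ n) (ρ : ℕ → ℤ) (hρ : ρ n = 1 - n) (t : ℕ) :
    DM (n + 1) ρ t = hh (1 + t) * DM n ρ 0 - DM n ρ (t + 1) := by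
  set A : Matrix (Fin (n+1)) (Fin (n+1)) SymF := Matrix.of fun p q : Fin (n+1) =>
    hh (ρ p + (q : ℤ) + if (q : ℕ) = (n+1) - 1 then (t : ℤ) else 0) with hA
  have hexp := Matrix.det_succ_row A (Fin.last n)
  set j1 : Fin (n+1) := ⟨n-1, by omega⟩ with hj1
  set j2 : Fin (n+1) := Fin.last n with hj2
  have hne : j1 ≠ j2 := by
    intro h
    have := congrArg Fin.val h
    simp only [hj1, hj2, Fin.val_mk, Fin.val_last] at this
    omega
  have hzero : ∀ j ∈ (Finset.univ : Finset (Fin (n+1))), j ∉ ({j1, j2} : Finset (Fin (n+1))) →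
      (-1 : SymF) ^ ((Fin.last n : ℕ) + (j:ℕ)) * A (Fin.last n) j
        * (A.submatrix (Fin.last n).succAbove j.succAbove).det = 0 := by
    intro j _ hj
    simp only [Finset.mem_insert, Finset.mem_singleton] at hj
    push_neg at hj
    have hjlt : (j : ℕ) < n - 1 := by
      rcases Nat.lt_or_ge (j : ℕ) (n-1) with h | h
      · exact h
      · exfalso
        have h1 : (j:ℕ) ≠ n - 1 := fun he => hj.1 (Fin.ext he)
        have h2 : (j:ℕ) ≠ n := fun he => hj.2 (Fin.ext he)
        omega
    have : A (Fin.last n) j = 0 := by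
      simp only [hA, Matrix.of_apply, Fin.val_last]
      rw [if_neg (by omega), hρ]
      apply hh_neg
      omega
    rw [this]; ring
  rw [← Finset.sum_subset (Finset.subset_univ ({j1, j2} : Finset (Fin (n+1)))) hzero] at hexp
  rw [Finset.sum_insert (by simp [hne]), Finset.sum_singleton] at hexp
  have hterm2 : (-1 : SymF) ^ ((Fin.last n : ℕ) + (j2:ℕ)) * A (Fin.last n) j2
      * (A.submatrix (Fin.last n).succAbove j2.succAbove).det
      = hh (1 + t) * DM n ρ 0 := by
    have hsign : (-1 : SymF) ^ ((Fin.last n : ℕ) + (j2:ℕ)) = 1 := by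
      rw [hj2]
      simp only [Fin.val_last]
      exact Even.neg_one_pow ⟨n, by ring⟩
    have hent : A (Fin.last n) j2 = hh (1 + t) := by
      simp only [hA, hj2, Matrix.of_apply, Fin.val_last]
      rw [if_pos (by omega)]
      exact hh_congr (by rw [hρ]; ring)
    have hmin : (A.submatrix (Fin.last n).succAbove j2.succAbove).det = DM n ρ 0 := by
      rw [DM]
      congr 1
      refine Matrix.ext fun p q => ?_
      simp only [hA, hj2, Matrix.submatrix_apply, Fin.succAbove_last, Matrix.of_apply,
        Fin.coe_castSucc]
      rw [if_neg (by omega)]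
      norm_num
    rw [hsign, hent, hmin, one_mul]
  have hterm1 : (-1 : SymF) ^ ((Fin.last n : ℕ) + (j1:ℕ)) * A (Fin.last n) j1
      * (A.submatrix (Fin.last n).succAbove j1.succAbove).det
      = - DM n ρ (t + 1) := by
    have hsign : (-1 : SymF) ^ ((Fin.last n : ℕ) + (j1:ℕ)) = -1 := by
      simp only [hj1, Fin.val_last, Fin.val_mk]
      exact Odd.neg_one_pow ⟨n - 1, by omega⟩
    have hent : A (Fin.last n) j1 = 1 := by
      simp only [hA, hj1, Matrix.of_apply, Fin.val_last, Fin.val_mk]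
      rw [if_neg (by omega), hρ]
      rw [hh_congr (show (1 : ℤ) - n + (n-1 : ℕ) + 0 = 0 by omega)]
      exact hh_zero
    have hmin : (A.submatrix (Fin.last n).succAbove j1.succAbove).det = DM n ρ (t + 1) := by
      rw [DM]
      congr 1
      refine Matrix.ext fun p q => ?_
      simp only [hA, Matrix.submatrix_apply, Fin.succAbove_last, Matrix.of_apply,
        Fin.coe_castSucc]
      rcases Nat.lt_or_ge (q : ℕ) (n - 1) with hq | hq
      · have hsa : j1.succAbove q = Fin.castSucc q := by
          rw [Fin.succAbove, if_pos]
          simp only [hj1, Fin.lt_def, Fin.coe_castSucc, Fin.val_mk]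
          omega
        rw [hsa]
        simp only [Fin.coe_castSucc]
        rw [if_neg (by omega), if_neg (by omega)]
      · have hq' : (q : ℕ) = n - 1 := by omega
        have hsa : j1.succAbove q = q.succ := by
          rw [Fin.succAbove, if_neg]
          simp only [hj1, Fin.lt_def, Fin.coe_castSucc, Fin.val_mk]
          omega
        rw [hsa]
        simp only [Fin.val_succ]
        rw [if_pos (by omega), if_pos hq']
        exact hh_congr (by push_cast; omega)
    rw [hsign, hent, hmin]
    ring
  rw [hterm1, hterm2] at hexp
  rw [DM, hexp]
  ring

def rA (m : ℕ) : ℕ → ℤ := fun p => if p = 0 then (m:ℤ)+1 else 1 - p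
def rB (a b : ℤ) : ℕ → ℤ := fun p => if p = 0 then a else if p = 1 then b - 1 else 1 - p

lemma base (m i : ℕ) (hi : 1 ≤ i) (t : ℕ) :
    hh i * DM 2 (rA m) t
    = (∑ x ∈ Finset.range (min m (i-1) + 1), DM 3 (rB ((m:ℤ)+i-x) ((x:ℤ)+1)) t)
    + ∑ x ∈ Finset.range (min m i + 1), DM 2 (rB ((m:ℤ)+1+i-x) ((x:ℤ)+1)) t := by
  set c : ℕ → ℤ := fun x => (m:ℤ)+1+i-x with hc
  set W : ℕ → SymF := fun x => hh (1+(t:ℤ)) * (hh (c x) * hh (x:ℤ)) - hh (c x) * hh ((x:ℤ)+1+t) with hW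
  set U : ℕ → SymF := fun x => hh (1+(t:ℤ)) * (hh (c x) * hh (x:ℤ)) - hh (c x + 1 + t) * hh (x:ℤ) with hU
  have h1 : ∀ x : ℕ, DM 3 (rB ((m:ℤ)+i-x) ((x:ℤ)+1)) t = W (x+1) - U x := by
    intro x
    rw [DM_succ 2 (by norm_num) _ (by norm_num [rB]) t, DM_two, DM_two]
    simp only [hW, hU, hc]
    norm_num [rB]
    ring_nf
  have h2 : ∀ x : ℕ, DM 2 (rB ((m:ℤ)+1+i-x) ((x:ℤ)+1)) t = U x - W x := by
    intro x
    rw [DM_two]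
    simp only [hW, hU, hc]
    norm_num [rB]
  have hW0 : W 0 = 0 := by
    simp only [hW, hc]
    push_cast
    rw [hh_zero]
    ring
  rcases le_or_gt i m with him | him
  · rw [min_eq_right (by omega : i - 1 ≤ m), min_eq_right him]
    rw [show i - 1 + 1 = i by omega]
    rw [Finset.sum_congr rfl (fun x _ => h1 x), Finset.sum_congr rfl (fun x _ => h2 x)]
    rw [Finset.sum_range_succ]
    have hcomb : ∑ x ∈ Finset.range i, (W (x+1) - U x) + ∑ x ∈ Finset.range i, (U x - W x)
        = W i - W 0 := by
      rw [← Finset.sum_add_distrib, ← Finset.sum_range_sub W i]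
      exact Finset.sum_congr rfl (fun x _ => by ring)
    rw [← add_assoc, hcomb, hW0, sub_zero]
    rw [DM_two]
    simp only [hW, hU, hc]
    norm_num [rA]
    rw [hh_zero]
    ring
  · rw [min_eq_left (by omega : m ≤ i - 1), min_eq_left (by omega : m ≤ i)]
    rw [Finset.sum_congr rfl (fun x _ => h1 x), Finset.sum_congr rfl (fun x _ => h2 x)]
    have hcomb : ∑ x ∈ Finset.range (m+1), (W (x+1) - U x) + ∑ x ∈ Finset.range (m+1), (U x - W x)
        = W (m+1) - W 0 := by
      rw [← Finset.sum_add_distrib, ← Finset.sum_range_sub W (m+1)]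
      exact Finset.sum_congr rfl (fun x _ => by ring)
    rw [hcomb, hW0, sub_zero]
    rw [DM_two]
    simp only [hW, hc]
    norm_num [rA]
    rw [hh_zero]
    ring


lemma rA_ge (m p : ℕ) (hp : 1 ≤ p) : rA m p = 1 - p := by
  rw [rA]; rw [if_neg (by omega)]

lemma rB_ge (a b : ℤ) (p : ℕ) (hp : 2 ≤ p) : rB a b p = 1 - p := by
  rw [rB]; rw [if_neg (by omega), if_neg (by omega)]

lemma main (m i : ℕ) (hi : 1 ≤ i) : ∀ k, 1 ≤ k → ∀ t : ℕ,
    hh i * DM (k+1) (rA m) t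
    = (∑ x ∈ Finset.range (min m (i-1) + 1), DM (k+2) (rB ((m:ℤ)+i-x) ((x:ℤ)+1)) t)
    + ∑ x ∈ Finset.range (min m i + 1), DM (k+1) (rB ((m:ℤ)+1+i-x) ((x:ℤ)+1)) t := by
  intro k
  induction k with
  | zero => intro h; omega
  | succ k ih =>
    intro _ t
    rcases Nat.eq_zero_or_pos k with rfl | hk1
    · exact base m i hi t
    · have e1 : DM (k+1+1) (rA m) t = hh (1+(t:ℤ)) * DM (k+1) (rA m) 0 - DM (k+1) (rA m) (t+1) :=
        DM_succ (k+1) (by omega) _ (rA_ge m (k+1) (by omega)) t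
      have e2 : ∀ a b : ℤ, DM (k+1+2) (rB a b) t
          = hh (1+(t:ℤ)) * DM (k+2) (rB a b) 0 - DM (k+2) (rB a b) (t+1) :=
        fun a b => DM_succ (k+2) (by omega) _ (rB_ge a b (k+2) (by omega)) t
      have e3 : ∀ a b : ℤ, DM (k+1+1) (rB a b) t
          = hh (1+(t:ℤ)) * DM (k+1) (rB a b) 0 - DM (k+1) (rB a b) (t+1) :=
        fun a b => DM_succ (k+1) (by omega) _ (rB_ge a b (k+1) (by omega)) t
      rw [e1]
      rw [Finset.sum_congr rfl fun x _ => e2 _ _, Finset.sum_congr rfl fun x _ => e3 _ _]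
      rw [Finset.sum_sub_distrib, Finset.sum_sub_distrib, ← Finset.mul_sum, ← Finset.mul_sum]
      have i0 := ih (by omega) 0
      have it := ih (by omega) (t+1)
      linear_combination (hh (1+(t:ℤ)) : SymF) * i0 - it

lemma schur_eq_DM (l : ℕ) (lam : Fin l → ℕ) (ρ : ℕ → ℤ)
    (h : ∀ p : Fin l, ρ (p:ℕ) = (lam p : ℤ) - p) : schur l lam = DM l ρ 0 := by
  rw [schur, DM]
  congr 1
  refine Matrix.ext fun p q => ?_
  simp only [Matrix.of_apply]
  rw [h p]
  simp only [Nat.cast_zero, ite_self, add_zero]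
  exact hh_congr (by ring)


/-- For `m ≥ 1`, `n ≥ 1` and `1 ≤ i ≤ n-1`,
`h_i · s_{(m+1,1^{n-i})} = ∑_{x=0}^{min(m,i-1)} s_{(m+i-x,x+1,1^{n-i})}
  + ∑_{x=0}^{min(m,i)} s_{(m+1+i-x,x+1,1^{n-i-1})}`. -/
theorem stmt13 (n m i : ℕ) (hm : 1 ≤ m) (hn : 1 ≤ n) (hi1 : 1 ≤ i) (hi2 : i ≤ n - 1) :
    hh (i : ℤ) * schur (n - i + 1) (fun k => if (k : ℕ) = 0 then m + 1 else 1)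
    = (∑ x ∈ Finset.range (min m (i-1) + 1),
        schur (n - i + 2)
          (fun k => if (k : ℕ) = 0 then m + i - x else if (k : ℕ) = 1 then x + 1 else 1))
      + ∑ x ∈ Finset.range (min m i + 1),
        schur (n - i + 1)
          (fun k => if (k : ℕ) = 0 then m + 1 + i - x else if (k : ℕ) = 1 then x + 1 else 1) := by
  have hk1 : 1 ≤ n - i := by omega
  have e0 : schur (n - i + 1) (fun k => if (k : ℕ) = 0 then m + 1 else 1)
      = DM ((n-i)+1) (rA m) 0 := by
    apply schur_eq_DM
    intro p
    simp only [rA]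
    split_ifs <;> omega
  have e1 : ∀ x ∈ Finset.range (min m (i-1) + 1),
      schur (n - i + 2) (fun k => if (k:ℕ)=0 then m+i-x else if (k:ℕ)=1 then x+1 else 1)
      = DM ((n-i)+2) (rB ((m:ℤ)+i-x) ((x:ℤ)+1)) 0 := by
    intro x hx
    rw [Finset.mem_range] at hx
    apply schur_eq_DM
    intro p
    simp only [rB]
    split_ifs <;> omega
  have e2 : ∀ x ∈ Finset.range (min m i + 1),
      schur (n - i + 1) (fun k => if (k:ℕ)=0 then m+1+i-x else if (k:ℕ)=1 then x+1 else 1)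
      = DM ((n-i)+1) (rB ((m:ℤ)+1+i-x) ((x:ℤ)+1)) 0 := by
    intro x hx
    rw [Finset.mem_range] at hx
    apply schur_eq_DM
    intro p
    simp only [rB]
    split_ifs <;> omega
  rw [e0, Finset.sum_congr rfl e1, Finset.sum_congr rfl e2]
  exact main m i hi1 (n-i) hk1 0
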